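/- (Truncated Gumbel categorical sampling, closed form) Let $0<\pi_1\le\dots\le\pi_K$ with $\sum_k\pi_k=1$, set $\pi_0=0$ (with the convention $e^{(K+1-i-\sum_{k\ge i}\pi_k/\pi_0)e^{-M}}=0$), and let $g_1,\dots,g_K$ be i.i.d. samples from the standard Gumbel distribution conditioned on $g\le M$. Then for each $1\le n\le K$, $P\big(\operatorname*{argmax}_i(\log\pi_i+g_i)=n\big)=\pi_n\sum_{i=1}^n\beta(i)$ where $\beta(i)=\frac{e^{(K+1-i-\frac{\sum_{k=i}^K\pi_k}{\pi_i})e^{-M}}-e^{(K+1-i-\frac{\sum_{k=i}^K\pi_k}{\pi_{i-1}})e^{-M}}}{\sum_{k=i}^K\pi_k}$. -/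

import Mathlib

open MeasureTheory ProbabilityTheory Real Set Filter Topology

section TruncGumbelAux


lemma hda (a : ℝ) (ha : a ≠ 0) (x : ℝ) :
    HasDerivAt (fun x => exp (-(exp (-x) * a)) / a) (exp (-x) * exp (-(exp (-x) * a))) x := by
  have h1 : HasDerivAt (fun x : ℝ => -(exp (-x) * a)) (exp (-x) * a) x := by
    have := (((hasDerivAt_neg x).exp).mul_const a).neg
    exact this.congr_deriv (by ring)
  have h2 := (h1.exp).div_const a
  exact h2.congr_deriv (by rw [mul_div_assoc, mul_div_cancel_right₀ _ ha, mul_comm])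

lemma bound_aux (a : ℝ) (ha : 0 < a) (x : ℝ) :
    exp (-x) * exp (-(exp (-x) * a)) ≤ 4 / a ^ 2 * exp x := by
  set u := exp (-x) with hu
  have hu0 : 0 < u := exp_pos _
  have hx : exp x = u⁻¹ := by rw [hu, ← Real.exp_neg, neg_neg]
  have h1 : (u * a / 2 + 1) ≤ exp (u * a / 2) := by
    have := Real.add_one_le_exp (u * a / 2); linarith
  have h3 : exp (u*a/2) * exp (u*a/2) = exp (u*a) := by rw [← Real.exp_add]; ring_nf
  have h5 : u^2 * a^2 ≤ 4 * exp (u*a) := by nlinarith [exp_pos (u*a/2), mul_pos hu0 ha]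
  have h4 : exp (-(u*a)) = (exp (u*a))⁻¹ := Real.exp_neg _
  have key : u * exp (-(u*a)) ≤ 4/(a^2*u) := by
    rw [h4, ← div_eq_mul_inv, div_le_div_iff₀ (exp_pos _) (by positivity)]
    nlinarith
  calc u * exp (-(u*a)) ≤ 4/(a^2*u) := key
    _ = 4 / a^2 * exp x := by rw [hx]; field_simp

lemma key_int (a : ℝ) (ha : 0 < a) (b : ℝ) :
    IntegrableOn (fun x => exp (-x) * exp (-(exp (-x) * a))) (Iic b) := by
  have hmeas : AEStronglyMeasurable (fun x => exp (-x) * exp (-(exp (-x) * a)))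
      (volume.restrict (Iic b)) := by
    apply Continuous.aestronglyMeasurable; continuity
  apply Integrable.mono' ((integrableOn_exp_Iic b).const_mul (4 / a ^ 2)) hmeas
  filter_upwards with x
  rw [Real.norm_of_nonneg (by positivity)]
  exact bound_aux a ha x

lemma key_ftc_Iic (a : ℝ) (ha : 0 < a) (b : ℝ) :
    ∫ x in Iic b, exp (-x) * exp (-(exp (-x) * a)) = exp (-(exp (-b) * a)) / a := by
  have := integral_Iic_of_hasDerivAt_of_tendsto
    (f := fun x => exp (-(exp (-x) * a)) / a)
    (f' := fun x => exp (-x) * exp (-(exp (-x) * a))) (a := b) (m := 0)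
    ((hda a ha.ne' b).continuousAt.continuousWithinAt)
    (fun x _ => hda a ha.ne' x) (key_int a ha b) ?_
  · simpa using this
  · have h1 : Tendsto (fun x : ℝ => -(exp (-x) * a)) atBot atBot := by
      apply Filter.tendsto_neg_atTop_atBot.comp
      exact (Real.tendsto_exp_atTop.comp tendsto_neg_atBot_atTop).atTop_mul_const ha
    have h2 : Tendsto (fun x : ℝ => exp (-(exp (-x) * a))) atBot (nhds 0) :=
      Real.tendsto_exp_atBot.comp h1
    simpa using h2.div_const a

lemma key_ftc_interval (a : ℝ) (ha : 0 < a) (x₁ x₂ : ℝ) :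
    ∫ x in x₁..x₂, exp (-x) * exp (-(exp (-x) * a)) =
      exp (-(exp (-x₂) * a)) / a - exp (-(exp (-x₁) * a)) / a := by
  apply intervalIntegral.integral_eq_sub_of_hasDerivAt (fun x _ => hda a ha.ne' x)
  apply Continuous.intervalIntegrable; continuity

noncomputable def phiM (M x : ℝ) : ℝ :=
  if x ≤ M then exp (exp (-M)) * (exp (-x) * exp (-(exp (-x) * 1))) else 0

noncomputable def FM (M x : ℝ) : ℝ := min (exp (-exp (-x)) / exp (-exp (-M))) 1

lemma phiM_nonneg (M x : ℝ) : 0 ≤ phiM M x := by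
  unfold phiM; split <;> positivity

lemma phiM_measurable (M : ℝ) : Measurable (phiM M) := by
  unfold phiM
  exact Measurable.ite measurableSet_Iic (by fun_prop) measurable_const

lemma FM_continuous (M : ℝ) : Continuous (FM M) := by
  unfold FM; fun_prop

lemma FM_nonneg (M x : ℝ) : 0 ≤ FM M x := le_min (by positivity) zero_le_one

lemma FM_le_one (M x : ℝ) : FM M x ≤ 1 := min_le_right _ _

lemma FM_of_le {M x : ℝ} (hx : x ≤ M) : FM M x = exp (exp (-M)) * exp (-exp (-x)) := by
  unfold FM
  rw [min_eq_left, div_eq_inv_mul, ← Real.exp_neg, neg_neg]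
  rw [div_le_one (exp_pos _)]
  exact exp_le_exp.2 (neg_le_neg (exp_le_exp.2 (neg_le_neg hx)))

lemma FM_of_ge {M x : ℝ} (hx : M ≤ x) : FM M x = 1 := by
  unfold FM
  rw [min_eq_right, ]
  rw [le_div_iff₀ (exp_pos _), one_mul]
  exact exp_le_exp.2 (neg_le_neg (exp_le_exp.2 (neg_le_neg hx)))

lemma lintegral_phiM (M x : ℝ) :
    ∫⁻ t in Iic x, ENNReal.ofReal (phiM M t) = ENNReal.ofReal (FM M x) := by
  have hre : ∀ b : ℝ, b ≤ M → ∫⁻ t in Iic b, ENNReal.ofReal (phiM M t)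
      = ENNReal.ofReal (exp (exp (-M)) * exp (-exp (-b))) := by
    intro b hb
    have h1 : ∫⁻ t in Iic b, ENNReal.ofReal (phiM M t)
        = ∫⁻ t in Iic b, ENNReal.ofReal (exp (exp (-M)) * (exp (-t) * exp (-(exp (-t) * 1)))) := by
      apply setLIntegral_congr_fun measurableSet_Iic
      intro t ht
      dsimp only
      rw [phiM, if_pos (ht.trans hb)]
    rw [h1, ← MeasureTheory.ofReal_integral_eq_lintegral_ofReal]
    · rw [MeasureTheory.integral_const_mul, key_ftc_Iic 1 one_pos b]
      simp
    · exact ((key_int 1 one_pos b).const_mul _)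
    · filter_upwards with t; positivity
  rcases le_or_gt x M with hx | hx
  · rw [hre x hx, FM_of_le hx]
  · have hsplit : Iic x = Iic M ∪ Ioc M x := (Set.Iic_union_Ioc_eq_Iic hx.le).symm
    rw [hsplit, lintegral_union measurableSet_Ioc, hre M le_rfl]
    · have h0 : ∫⁻ t in Ioc M x, ENNReal.ofReal (phiM M t) = 0 := by
        rw [← lintegral_zero (μ := volume.restrict (Ioc M x))]
        apply setLIntegral_congr_fun measurableSet_Ioc
        intro t ht
        dsimp only
        rw [phiM, if_neg (not_le.2 ht.1)]
        simp
      rw [h0, add_zero, FM_of_ge hx.le, ← Real.exp_add]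
      simp
    · exact Set.disjoint_left.2 fun t ht1 ht2 => absurd ht1 (not_le.2 ht2.1)

lemma law_eq {Ω : Type*} [MeasurableSpace Ω] (μ : Measure Ω) [IsProbabilityMeasure μ]
    (M : ℝ) (gi : Ω → ℝ) (hm : Measurable gi)
    (ht : ∀ x : ℝ, μ {ω | gi ω ≤ x} = ENNReal.ofReal (min (exp (-exp (-x)) / exp (-exp (-M))) 1)) :
    μ.map gi = volume.withDensity (fun t => ENNReal.ofReal (phiM M t)) := by
  haveI : IsProbabilityMeasure (μ.map gi) := Measure.isProbabilityMeasure_map hm.aemeasurable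
  apply Measure.ext_of_Iic
  intro a
  rw [Measure.map_apply hm measurableSet_Iic,
    withDensity_apply _ measurableSet_Iic, lintegral_phiM]
  exact ht a

lemma meas_Iio {Ω : Type*} [MeasurableSpace Ω] (μ : Measure Ω) [IsProbabilityMeasure μ]
    (M : ℝ) (gi : Ω → ℝ) (hm : Measurable gi)
    (ht : ∀ x : ℝ, μ {ω | gi ω ≤ x} = ENNReal.ofReal (min (exp (-exp (-x)) / exp (-exp (-M))) 1))
    (x : ℝ) : μ (gi ⁻¹' Iio x) = ENNReal.ofReal (FM M x) := by
  rw [← Measure.map_apply hm measurableSet_Iio, law_eq μ M gi hm ht,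
    withDensity_apply _ measurableSet_Iio,
    setLIntegral_congr Iio_ae_eq_Iic, lintegral_phiM]


lemma ofReal_prod_aux {α : Type*} (s : Finset α) (f : α → ℝ) (h : ∀ i ∈ s, 0 ≤ f i) :
    ENNReal.ofReal (∏ i ∈ s, f i) = ∏ i ∈ s, ENNReal.ofReal (f i) := by
  classical
  induction s using Finset.cons_induction with
  | empty => simp
  | cons a s ha ih =>
    rw [Finset.prod_cons, Finset.prod_cons, ENNReal.ofReal_mul (h a (Finset.mem_cons_self a s)),
      ih (fun i hi => h i (Finset.mem_cons_of_mem hi))]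

lemma Hval (K n j : ℕ) (M : ℝ) (p : ℕ → ℝ)
    (hpos : ∀ i ∈ Finset.Icc 1 K, 0 < p i)
    (hmono : ∀ i j, 1 ≤ i → i ≤ j → j ≤ K → p i ≤ p j)
    (hn : n ∈ Finset.Icc 1 K) (hj1 : 1 ≤ j) (hjn : j ≤ n)
    (x : ℝ) (hx1 : ∀ i, 1 ≤ i → i < j → M + (log (p i) - log (p n)) ≤ x)
    (hx2 : x < M + (log (p j) - log (p n))) :
    phiM M x * ∏ i ∈ (Finset.Icc 1 K).erase n, FM M (x + (log (p n) - log (p i)))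
      = exp (((K:ℝ) + 1 - j) * exp (-M)) *
        (exp (-x) * exp (-(exp (-x) * ((∑ k ∈ Finset.Icc j K, p k) / p n)))) := by
  obtain ⟨hn1, hnK⟩ := Finset.mem_Icc.mp hn
  have hpn : 0 < p n := hpos n hn
  have hjK : j ≤ K := hjn.trans hnK
  have hpj : 0 < p j := hpos j (Finset.mem_Icc.mpr ⟨hj1, hjK⟩)
  have hpjn : p j ≤ p n := hmono j n hj1 hjn hnK
  have hlogjn : log (p j) ≤ log (p n) := Real.log_le_log hpj hpjn
  have hxM : x < M := by linarith
  -- split the index set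
  have hsplit : (Finset.Icc 1 K).erase n =
      (Finset.Icc 1 (j-1)) ∪ ((Finset.Icc j K).erase n) := by
    ext i
    simp only [Finset.mem_erase, Finset.mem_Icc, Finset.mem_union]
    omega
  have hdisj : Disjoint (Finset.Icc 1 (j-1)) ((Finset.Icc j K).erase n) := by
    rw [Finset.disjoint_left]
    intro i hi hi'
    simp only [Finset.mem_erase, Finset.mem_Icc] at hi hi'
    omega
  rw [hsplit, Finset.prod_union hdisj]
  -- first product is 1
  have h1 : ∏ i ∈ Finset.Icc 1 (j-1), FM M (x + (log (p n) - log (p i))) = 1 := by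
    apply Finset.prod_eq_one
    intro i hi
    rw [Finset.mem_Icc] at hi
    apply FM_of_ge
    have := hx1 i hi.1 (by omega)
    linarith
  -- second product
  have h2 : ∀ i ∈ (Finset.Icc j K).erase n,
      FM M (x + (log (p n) - log (p i)))
        = exp (exp (-M)) * exp (-(exp (-x) * (p i / p n))) := by
    intro i hi
    rw [Finset.mem_erase, Finset.mem_Icc] at hi
    have hpi : 0 < p i := hpos i (Finset.mem_Icc.mpr ⟨hj1.trans hi.2.1, hi.2.2⟩)
    have hpij : p j ≤ p i := hmono j i hj1 hi.2.1 hi.2.2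
    have hle : x + (log (p n) - log (p i)) ≤ M := by
      have : log (p j) ≤ log (p i) := Real.log_le_log hpj hpij
      linarith
    rw [FM_of_le hle]
    congr 2
    rw [neg_add, Real.exp_add, neg_sub, Real.exp_sub, Real.exp_log hpi, Real.exp_log hpn]
  rw [Finset.prod_congr rfl h2, Finset.prod_mul_distrib, Finset.prod_const, ← Real.exp_sum]
  have hcard : ((Finset.Icc j K).erase n).card = K - j := by
    rw [Finset.card_erase_of_mem (Finset.mem_Icc.mpr ⟨hjn, hnK⟩), Nat.card_Icc]
    omega
  have hsum' : ∑ i ∈ (Finset.Icc j K).erase n, -(exp (-x) * (p i / p n))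
      = -(exp (-x) * ((∑ k ∈ Finset.Icc j K, p k) - p n) / p n) := by
    rw [Finset.sum_neg_distrib, ← Finset.mul_sum, ← Finset.sum_div,
      Finset.sum_erase_eq_sub (Finset.mem_Icc.mpr ⟨hjn, hnK⟩)]
    ring
  rw [hsum', hcard, phiM, if_pos hxM.le, h1, one_mul,
    show exp (exp (-M)) ^ (K - j) = exp (((K : ℝ) - j) * exp (-M)) from ?_]
  · simp only [← Real.exp_add, mul_assoc]
    rw [Real.exp_eq_exp]
    field_simp
    ring
  · rw [← Real.exp_nat_mul]
    congr 1
    push_cast [hjK]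
    ring

lemma reduction {Ω : Type*} [MeasurableSpace Ω] (μ : Measure Ω) [IsProbabilityMeasure μ]
    (M : ℝ) (g : ℕ → Ω → ℝ) (hmeas : ∀ i, Measurable (g i))
    (hindep : iIndepFun g μ)
    (htrunc : ∀ i, ∀ x : ℝ, μ {ω | g i ω ≤ x} =
        ENNReal.ofReal (min (exp (-exp (-x)) / exp (-exp (-M))) 1))
    (T : Finset ℕ) (n : ℕ) (hnT : n ∉ T) (c : ℕ → ℝ) :
    μ {ω | ∀ i ∈ T, g i ω < g n ω + c i} =
      ∫⁻ x, ENNReal.ofReal (phiM M x) * ∏ i ∈ T, ENNReal.ofReal (FM M (x + c i)) := by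
  classical
  set Y : Ω → (↥T → ℝ) := fun ω i => g i ω with hY
  have hYmeas : Measurable Y := measurable_pi_lambda _ (fun i => hmeas i)
  set E : Set (ℝ × (↥T → ℝ)) := ⋂ i : ↥T, {q : ℝ × (↥T → ℝ) | q.2 i < q.1 + c i} with hE
  have hEmeas : MeasurableSet E := by
    apply MeasurableSet.iInter
    intro i
    exact measurableSet_lt (by fun_prop) (by fun_prop)
  have hev : {ω | ∀ i ∈ T, g i ω < g n ω + c i} = (fun ω => (g n ω, Y ω)) ⁻¹' E := by
    ext ω
    simp [hE, hY, Set.mem_iInter, Subtype.forall]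
  have hIndep : IndepFun (g n) Y μ := by
    have h := hindep.indepFun_finset {n} T (Finset.disjoint_singleton_left.2 hnT) hmeas
    have h2 := h.comp (ψ := id) (measurable_pi_apply (⟨n, Finset.mem_singleton_self n⟩ : ({n} : Finset ℕ))) measurable_id
    exact h2
  have hmap : μ.map (fun ω => (g n ω, Y ω)) = (μ.map (g n)).prod (μ.map Y) :=
    (indepFun_iff_map_prod_eq_prod_map_map (hmeas n).aemeasurable hYmeas.aemeasurable).mp hIndep
  haveI : IsProbabilityMeasure (μ.map Y) := Measure.isProbabilityMeasure_map hYmeas.aemeasurable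
  haveI : IsProbabilityMeasure (μ.map (g n)) := Measure.isProbabilityMeasure_map (hmeas n).aemeasurable
  rw [hev, ← Measure.map_apply ((hmeas n).prodMk hYmeas) hEmeas, hmap,
    Measure.prod_apply hEmeas]
  have hsec : ∀ x : ℝ, (μ.map Y) (Prod.mk x ⁻¹' E)
      = ∏ i ∈ T, ENNReal.ofReal (FM M (x + c i)) := by
    intro x
    have h1 : Prod.mk x ⁻¹' E = ⋂ i : ↥T, (fun f : ↥T → ℝ => f i) ⁻¹' Iio (x + c i) := by
      ext f; simp [hE]
    rw [h1, Measure.map_apply hYmeas]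
    · have h2 : Y ⁻¹' (⋂ i : ↥T, (fun f : ↥T → ℝ => f i) ⁻¹' Iio (x + c i))
          = ⋂ i ∈ T, g i ⁻¹' Iio (x + c i) := by
        ext ω; simp [hY, Set.mem_iInter, Subtype.forall]
      rw [h2, hindep.measure_inter_preimage_eq_mul T (fun i _ => measurableSet_Iio)]
      exact Finset.prod_congr rfl fun i _ => meas_Iio μ M (g i) (hmeas i) (htrunc i) _
    · exact MeasurableSet.iInter fun i => (measurable_pi_apply i) measurableSet_Iio
  calc ∫⁻ x, (μ.map Y) (Prod.mk x ⁻¹' E) ∂(μ.map (g n))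
      = ∫⁻ x, ∏ i ∈ T, ENNReal.ofReal (FM M (x + c i)) ∂(μ.map (g n)) := by
        exact lintegral_congr hsec
    _ = ∫⁻ x, ENNReal.ofReal (phiM M x) * ∏ i ∈ T, ENNReal.ofReal (FM M (x + c i)) := by
        rw [law_eq μ M (g n) (hmeas n) (htrunc n),
          lintegral_withDensity_eq_lintegral_mul _ (phiM_measurable M).ennreal_ofReal]
        · rfl
        · exact Finset.measurable_prod _ fun i _ =>
            (((FM_continuous M).measurable.comp (measurable_add_const (c i)))).ennreal_ofReal

lemma main_calc (K n : ℕ) (M : ℝ) (p : ℕ → ℝ)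
    (hpos : ∀ i ∈ Finset.Icc 1 K, 0 < p i)
    (hmono : ∀ i j, 1 ≤ i → i ≤ j → j ≤ K → p i ≤ p j)
    (hn : n ∈ Finset.Icc 1 K) :
    ∫⁻ x, ENNReal.ofReal (phiM M x) *
        ∏ i ∈ (Finset.Icc 1 K).erase n, ENNReal.ofReal (FM M (x + (log (p n) - log (p i))))
      = ENNReal.ofReal (p n * ∑ i ∈ Finset.Icc 1 n,
        (exp ((((K : ℝ) + 1 - i) - (∑ k ∈ Finset.Icc i K, p k) / p i) * exp (-M)) -
          (if i = 1 then 0 else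
            exp ((((K : ℝ) + 1 - i) - (∑ k ∈ Finset.Icc i K, p k) / p (i - 1)) * exp (-M)))) /
        (∑ k ∈ Finset.Icc i K, p k)) := by
  obtain ⟨hn1, hnK⟩ := Finset.mem_Icc.mp hn
  have hpn : 0 < p n := hpos n hn
  set H : ℝ → ℝ := fun x =>
    phiM M x * ∏ i ∈ (Finset.Icc 1 K).erase n, FM M (x + (log (p n) - log (p i))) with hH
  set β : ℕ → ℝ := fun i =>
    (exp ((((K : ℝ) + 1 - i) - (∑ k ∈ Finset.Icc i K, p k) / p i) * exp (-M)) -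
      (if i = 1 then 0 else
        exp ((((K : ℝ) + 1 - i) - (∑ k ∈ Finset.Icc i K, p k) / p (i - 1)) * exp (-M)))) /
    (∑ k ∈ Finset.Icc i K, p k) with hβ
  set tt : ℕ → ℝ := fun j => M + (log (p j) - log (p n)) with htt
  have hSpos : ∀ j, 1 ≤ j → j ≤ n → 0 < ∑ k ∈ Finset.Icc j K, p k := by
    intro j hj1 hjn
    apply Finset.sum_pos
    · intro k hk
      rw [Finset.mem_Icc] at hk
      exact hpos k (Finset.mem_Icc.mpr ⟨hj1.trans hk.1, hk.2⟩)
    · exact ⟨n, Finset.mem_Icc.mpr ⟨hjn, hnK⟩⟩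
  have httmono : ∀ a b, 1 ≤ a → a ≤ b → b ≤ n → tt a ≤ tt b := by
    intro a b ha hab hbn
    have := Real.log_le_log (hpos a (Finset.mem_Icc.mpr ⟨ha, (hab.trans hbn).trans hnK⟩))
      (hmono a b ha hab (hbn.trans hnK))
    simp only [htt]
    linarith
  have httn : tt n = M := by simp [htt]
  -- integrability
  have hphi_int : Integrable (phiM M) := by
    have heq : phiM M = Set.indicator (Set.Iic M)
        (fun x => exp (exp (-M)) * (exp (-x) * exp (-(exp (-x) * 1)))) := by
      funext x
      rw [Set.indicator_apply]
      unfold phiM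
      simp [Set.mem_Iic]
    rw [heq]
    exact MeasureTheory.IntegrableOn.integrable_indicator
      ((key_int 1 one_pos M).const_mul _) measurableSet_Iic
  have hHmeas : Measurable H := by
    apply (phiM_measurable M).mul
    exact Finset.measurable_prod _ fun i _ =>
      (FM_continuous M).measurable.comp (measurable_add_const _)
  have hHnonneg : ∀ x, 0 ≤ H x := fun x =>
    mul_nonneg (phiM_nonneg M x) (Finset.prod_nonneg fun i _ => FM_nonneg M _)
  have hHint : Integrable H := by
    apply Integrable.mono' hphi_int hHmeas.aestronglyMeasurable
    filter_upwards with x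
    rw [Real.norm_of_nonneg (hHnonneg x)]
    calc H x ≤ phiM M x * 1 := by
          apply mul_le_mul_of_nonneg_left _ (phiM_nonneg M x)
          exact Finset.prod_le_one (fun i _ => FM_nonneg M _) (fun i _ => FM_le_one M _)
      _ = phiM M x := mul_one _
  -- evaluation of antiderivative at the point tt i
  have heval : ∀ j i, 1 ≤ j → j ≤ n → 1 ≤ i → i ≤ n →
      exp (((K:ℝ)+1-j) * exp (-M)) *
        (exp (-(exp (-(tt i)) * ((∑ k ∈ Finset.Icc j K, p k) / p n)))
          / ((∑ k ∈ Finset.Icc j K, p k) / p n))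
      = p n * exp ((((K:ℝ)+1-j) - (∑ k ∈ Finset.Icc j K, p k) / p i) * exp (-M))
          / (∑ k ∈ Finset.Icc j K, p k) := by
    intro j i hj1 hjn hi1 hin
    have hpi : 0 < p i := hpos i (Finset.mem_Icc.mpr ⟨hi1, hin.trans hnK⟩)
    have hS := hSpos j hj1 hjn
    have h1 : exp (-(tt i)) = exp (-M) * (p n / p i) := by
      simp only [htt]
      rw [neg_add, Real.exp_add, neg_sub, Real.exp_sub, Real.exp_log hpn, Real.exp_log hpi]
    have h2 : exp ((((K:ℝ)+1-j) - (∑ k ∈ Finset.Icc j K, p k) / p i) * exp (-M))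
        = exp (((K:ℝ)+1-j) * exp (-M)) *
          exp (-(exp (-M) * (p n / p i) * ((∑ k ∈ Finset.Icc j K, p k) / p n))) := by
      rw [← Real.exp_add]
      congr 1
      field_simp
      ring
    rw [h1, h2]
    field_simp
  -- piece integrals
  have hpieceIic : ∫ x in Iic (tt 1), H x = p n * β 1 := by
    have ha : 0 < (∑ k ∈ Finset.Icc 1 K, p k) / p n := div_pos (hSpos 1 le_rfl hn1) hpn
    have h1 : ∫ x in Iic (tt 1), H x = ∫ x in Iio (tt 1), H x :=
      (setIntegral_congr_set Iio_ae_eq_Iic).symm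
    have h2 : ∫ x in Iio (tt 1), H x = ∫ x in Iio (tt 1),
        exp (((K:ℝ) + 1 - ((1:ℕ):ℝ)) * exp (-M)) *
          (exp (-x) * exp (-(exp (-x) * ((∑ k ∈ Finset.Icc 1 K, p k) / p n)))) := by
      apply setIntegral_congr_fun measurableSet_Iio
      intro x hx
      exact Hval K n 1 M p hpos hmono hn le_rfl hn1 x (fun i h1 h2 => by omega) hx
    rw [h1, h2, setIntegral_congr_set Iio_ae_eq_Iic, integral_const_mul,
      key_ftc_Iic _ ha, heval 1 1 le_rfl hn1 le_rfl hn1, hβ]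
    simp only [reduceIte, sub_zero, Nat.cast_one]
    ring
  have hpieceIoc : ∀ m, 1 ≤ m → m + 1 ≤ n →
      ∫ x in Ioc (tt m) (tt (m+1)), H x = p n * β (m+1) := by
    intro m hm1 hmn
    have hle : tt m ≤ tt (m+1) := httmono m (m+1) hm1 (Nat.le_succ m) hmn
    have ha : 0 < (∑ k ∈ Finset.Icc (m+1) K, p k) / p n :=
      div_pos (hSpos (m+1) (by omega) hmn) hpn
    have h1 : ∫ x in Ioc (tt m) (tt (m+1)), H x = ∫ x in Ioo (tt m) (tt (m+1)), H x :=
      (setIntegral_congr_set Ioo_ae_eq_Ioc).symm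
    have h2 : ∫ x in Ioo (tt m) (tt (m+1)), H x = ∫ x in Ioo (tt m) (tt (m+1)),
        exp (((K:ℝ) + 1 - (((m:ℕ)+1:ℕ):ℝ)) * exp (-M)) *
          (exp (-x) * exp (-(exp (-x) * ((∑ k ∈ Finset.Icc (m+1) K, p k) / p n)))) := by
      apply setIntegral_congr_fun measurableSet_Ioo
      intro x hx
      apply Hval K n (m+1) M p hpos hmono hn (by omega) hmn x
      · intro i hi1 him
        have : tt i ≤ tt m := httmono i m hi1 (by omega) (by omega)
        exact this.trans hx.1.le
      · exact hx.2
    rw [h1, h2, setIntegral_congr_set Ioo_ae_eq_Ioc,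
      ← intervalIntegral.integral_of_le hle, intervalIntegral.integral_const_mul,
      key_ftc_interval _ ha, mul_sub, heval (m+1) (m+1) (by omega) hmn (by omega) hmn,
      heval (m+1) m (by omega) hmn hm1 (by omega), hβ]
    have hne : m + 1 ≠ 1 := by omega
    simp only [hne, if_false, if_neg hne, Nat.add_sub_cancel]
    push_cast
    ring
  -- induction
  have hind : ∀ m, 1 ≤ m → m ≤ n → ∫ x in Iic (tt m), H x = p n * ∑ i ∈ Finset.Icc 1 m, β i := by
    intro m hm
    induction m, hm using Nat.le_induction with
    | base =>
      intro _
      rw [hpieceIic, Finset.Icc_self, Finset.sum_singleton]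
    | succ m hm ih =>
      intro hmn
      have hle : tt m ≤ tt (m+1) := httmono m (m+1) hm (Nat.le_succ m) hmn
      rw [← Set.Iic_union_Ioc_eq_Iic hle,
        setIntegral_union (Set.Iic_disjoint_Ioc le_rfl) measurableSet_Ioc
          hHint.integrableOn hHint.integrableOn,
        ih (by omega), hpieceIoc m hm hmn,
        Finset.sum_Icc_succ_top (by omega : 1 ≤ m + 1)]
      ring
  -- conclude
  have hIoi : ∫ x in Ioi M, H x = 0 := by
    rw [setIntegral_congr_fun measurableSet_Ioi (g := fun _ => (0:ℝ))]
    · exact integral_zero _ _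
    · intro x hx
      have : ¬ x ≤ M := not_le.2 hx
      simp only [hH, phiM, if_neg this, zero_mul]
  have hcore : ∫ x, H x = p n * ∑ i ∈ Finset.Icc 1 n, β i := by
    rw [← intervalIntegral.integral_Iic_add_Ioi (b := M) hHint.integrableOn hHint.integrableOn,
      hIoi, add_zero, ← httn, hind n hn1 le_rfl]
  calc ∫⁻ x, ENNReal.ofReal (phiM M x) *
        ∏ i ∈ (Finset.Icc 1 K).erase n, ENNReal.ofReal (FM M (x + (log (p n) - log (p i))))
      = ∫⁻ x, ENNReal.ofReal (H x) := by
        apply lintegral_congr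
        intro x
        rw [← ofReal_prod_aux _ _ (fun i _ => FM_nonneg M _),
          ← ENNReal.ofReal_mul (phiM_nonneg M x)]
    _ = ENNReal.ofReal (∫ x, H x) :=
        (ofReal_integral_eq_lintegral_ofReal hHint (ae_of_all _ hHnonneg)).symm
    _ = ENNReal.ofReal (p n * ∑ i ∈ Finset.Icc 1 n, β i) := by rw [hcore]

end TruncGumbelAux

/-- Closed-form class probabilities for categorical sampling with truncated Gumbel noise.
The classes `1,…,K` have probabilities `0 < p 1 ≤ … ≤ p K` summing to `1` (with the
convention `p 0 = 0`, so the `i = 1` term `e^{(⋯ - S/p 0)e^{-M}}` is `0`), and the noise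
variables are i.i.d. standard Gumbel conditioned on `g ≤ M`. -/
theorem stmt_12 {Ω : Type*} [MeasurableSpace Ω] (μ : Measure Ω) [IsProbabilityMeasure μ]
    (K : ℕ) (hK : 1 ≤ K) (M : ℝ) (p : ℕ → ℝ)
    (hp0 : p 0 = 0)
    (hpos : ∀ i ∈ Finset.Icc 1 K, 0 < p i)
    (hmono : ∀ i j, 1 ≤ i → i ≤ j → j ≤ K → p i ≤ p j)
    (hsum : ∑ i ∈ Finset.Icc 1 K, p i = 1)
    (g : ℕ → Ω → ℝ) (hmeas : ∀ i, Measurable (g i))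
    (hindep : iIndepFun g μ)
    (htrunc : ∀ i, ∀ x : ℝ,
      μ {ω | g i ω ≤ x} =
        ENNReal.ofReal (min (exp (-exp (-x)) / exp (-exp (-M))) 1))
    (n : ℕ) (hn : n ∈ Finset.Icc 1 K) :
    μ {ω | ∀ i ∈ Finset.Icc 1 K, i ≠ n → log (p i) + g i ω < log (p n) + g n ω} =
      ENNReal.ofReal (p n * ∑ i ∈ Finset.Icc 1 n,
        (exp ((((K : ℝ) + 1 - i) - (∑ k ∈ Finset.Icc i K, p k) / p i) * exp (-M)) -
          (if i = 1 then 0 else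
            exp ((((K : ℝ) + 1 - i) - (∑ k ∈ Finset.Icc i K, p k) / p (i - 1)) * exp (-M)))) /
        (∑ k ∈ Finset.Icc i K, p k)) := by
  have hset : {ω | ∀ i ∈ Finset.Icc 1 K, i ≠ n → log (p i) + g i ω < log (p n) + g n ω}
      = {ω | ∀ i ∈ (Finset.Icc 1 K).erase n,
          g i ω < g n ω + (fun i => log (p n) - log (p i)) i} := by
    ext ω
    simp only [Set.mem_setOf_eq]
    constructor
    · intro h i hi
      rw [Finset.mem_erase] at hi
      have := h i hi.2 hi.1
      show g i ω < g n ω + (log (p n) - log (p i))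
      linarith
    · intro h i hi hne
      have : g i ω < g n ω + (log (p n) - log (p i)) := h i (Finset.mem_erase.mpr ⟨hne, hi⟩)
      linarith
  rw [hset, reduction μ M g hmeas hindep htrunc ((Finset.Icc 1 K).erase n) n
    (Finset.notMem_erase n _) (fun i => log (p n) - log (p i))]
  exact main_calc K n M p hpos hmono hn
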